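/- Let G be a simplicial group with Moore complex NG_n = ⋂_{i=1}^{n} ker ∂_i. For n ≥ 0 let S(n) denote the set of all subsets α ⊆ {0,1,…,n−1}, ordered lexicographically (with α = {i_r > … > i_1} written in decreasing order, and S(n) ordered as ∅ < {0} < {1} < {1,0} < {2} < …), and for α = {i_r > … > i_1} write s_α = s_{i_r} ∘ ⋯ ∘ s_{i_1} (with s_∅ = id). Then the map ∏_{α ∈ S(n)} NG_{n−#α} → G_n sending (x_α)_{α ∈ S(n)} to the product ∏_{α ∈ S(n)} s_α(x_α), taken in the lexicographic order of S(n), is a bijection; i.e., every g ∈ G_n has a unique such factorization, realizing the iterated semidirect product decomposition G_n ≅ (…(NG_n ⋊ s_0 NG_{n-1}) ⋊ … ⋊ s_{n-1}⋯s_0 NG_0). -/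

import Mathlib

/-- The underlying family of groups of a simplicial group. -/
structure PreSimplicialGroup where
  G : ℕ → Type
  grp : ∀ n, Group (G n)

attribute [instance] PreSimplicialGroup.grp

/-- A simplicial group: a family of groups `G n` together with face homomorphisms
`d n i : G (n+1) →* G n` (for `i ≤ n+1`) and degeneracy homomorphisms
`s n i : G n →* G (n+1)` (for `i ≤ n`) satisfying the simplicial identities. -/
structure SimplicialGroup extends PreSimplicialGroup where
  d : ∀ n : ℕ, ℕ → (G (n+1) →* G n)
  s : ∀ n : ℕ, ℕ → (G n →* G (n+1))
  dd : ∀ (n i j : ℕ), i ≤ j → j ≤ n + 1 →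
    (d n i).comp (d (n+1) (j+1)) = (d n j).comp (d (n+1) i)
  ss : ∀ (n i j : ℕ), i ≤ j → j ≤ n →
    (s (n+1) i).comp (s n j) = (s (n+1) (j+1)).comp (s n i)
  ds_lt : ∀ (n i j : ℕ), i ≤ j → j ≤ n →
    (d (n+1) i).comp (s (n+1) (j+1)) = (s n j).comp (d n i)
  ds_self : ∀ (n j : ℕ), j ≤ n → (d n j).comp (s n j) = MonoidHom.id (G n)
  ds_succ : ∀ (n j : ℕ), j ≤ n → (d n (j+1)).comp (s n j) = MonoidHom.id (G n)
  ds_gt : ∀ (n i j : ℕ), j < i → i ≤ n + 1 →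
    (d (n+1) (i+1)).comp (s (n+1) j) = (s n j).comp (d n i)

/-- The Moore complex: `N X n = ⋂_{i=1}^{n} ker ∂ᵢ` as a subgroup of `X.G n`,
with `N X 0 = X.G 0`. -/
def SimplicialGroup.N (X : SimplicialGroup) : (n : ℕ) → Subgroup (X.G n)
  | 0 => ⊤
  | (n+1) => ⨅ i ∈ Finset.Icc 1 (n+1), (X.d n i).ker

/-- Transport along an equality of levels, as a group homomorphism. -/
def SimplicialGroup.castHom (X : SimplicialGroup) {a b : ℕ} (h : a = b) :
    X.G a →* X.G b where
  toFun g := h ▸ g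
  map_one' := by subst h; rfl
  map_mul' := by subst h; intros; rfl

/-- The composite degeneracy `s_{i_r} ∘ ⋯ ∘ s_{i_1}` associated to a list
`l = [i_r, …, i_1]` of degeneracy indices (leftmost applied last), starting at level `m`. -/
def SimplicialGroup.sComp (X : SimplicialGroup) : (l : List ℕ) → (m : ℕ) →
    (X.G m →* X.G (m + l.length))
  | [], m => MonoidHom.id (X.G m)
  | i :: t, m => (X.s (m + t.length) i).comp (X.sComp t m)

/-- The composite degeneracy `s_α : G_{n - #α} →* G_n` associated to a finite set
`α` of degeneracy indices, `s_α = s_{i_r} ∘ ⋯ ∘ s_{i_1}` for `α = {i_r > … > i_1}`. -/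
def SimplicialGroup.sFinset (X : SimplicialGroup) (n : ℕ) (A : Finset ℕ)
    (h : A.card ≤ n) : X.G (n - A.card) →* X.G n :=
  (X.castHom (show (n - A.card) + ((A.sort (· ≤ ·)).reverse).length = n by
      simp only [List.length_reverse, Finset.length_sort]; omega)).comp
    (X.sComp ((A.sort (· ≤ ·)).reverse) (n - A.card))

/-- The subset of `{0, …, n-1}` encoded by the binary expansion of `m`; the natural
order on codes `m` is exactly the lexicographic order on the subsets
`α = {i_r > … > i_1}` (∅ < {0} < {1} < {1,0} < {2} < …). -/
def bitSet (n m : ℕ) : Finset ℕ := (Finset.range n).filter (fun i => Nat.testBit m i)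

theorem bitSet_card_le (n m : ℕ) : (bitSet n m).card ≤ n :=
  (Finset.card_filter_le _ _).trans (le_of_eq (Finset.card_range n))

lemma prod_finRange_one {M : Type*} [Monoid M] (N : ℕ) (h : N = 1) (f : Fin N → M) :
    ((List.finRange N).map f).prod = f ⟨0, by omega⟩ := by
  subst h
  have : List.finRange 1 = [⟨0, Nat.zero_lt_one⟩] := by decide
  rw [this]
  simp

namespace SimplicialGroup

variable (X : SimplicialGroup)

lemma castHom_self {a : ℕ} (h : a = a) (g : X.G a) : X.castHom h g = g := rfl

lemma castHom_castHom {a b c : ℕ} (h1 : a = b) (h2 : b = c) (g : X.G a) :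
    X.castHom h2 (X.castHom h1 g) = X.castHom (h1.trans h2) g := by subst h1; subst h2; rfl

lemma s_castHom {a b : ℕ} (h : a = b) (i : ℕ) (g : X.G a) :
    X.s b i (X.castHom h g) = X.castHom (by rw [h]) (X.s a i g) := by subst h; rfl

lemma sComp_castHom (l : List ℕ) {a b : ℕ} (h : a = b) (g : X.G a) :
    X.sComp l b (X.castHom h g) = X.castHom (by rw [h]) (X.sComp l a g) := by subst h; rfl

lemma sComp_congr {l₁ l₂ : List ℕ} (h : l₁ = l₂) (m : ℕ) (z : X.G m) :
    X.castHom (show m + l₁.length = m + l₂.length by rw [h]) (X.sComp l₁ m z) =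
      X.sComp l₂ m z := by subst h; rfl

lemma sComp_congr' {l₁ l₂ : List ℕ} (h : l₁ = l₂) (m : ℕ) (z : X.G m) :
    X.sComp l₁ m z =
      X.castHom (show m + l₂.length = m + l₁.length by rw [h]) (X.sComp l₂ m z) := by
  subst h; rfl

/-- Uniform version of the partial-kernel subgroups `⋂_{i=k+1}^{n} ker ∂ᵢ`. -/
def KSub (k n : ℕ) : Subgroup (X.G n) :=
  ⨅ (q : ℕ) (h : n = q + 1) (i : ℕ) (_ : i ∈ Finset.Icc (k+1) n),
    ((X.d q i).comp (X.castHom h)).ker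

lemma mem_KSub {k n : ℕ} {g : X.G n} :
    g ∈ X.KSub k n ↔ ∀ (q : ℕ) (h : n = q + 1) (i : ℕ),
      k + 1 ≤ i → i ≤ n → X.d q i (X.castHom h g) = 1 := by
  simp [KSub, Subgroup.mem_iInf, MonoidHom.mem_ker, Finset.mem_Icc, and_imp]

lemma KSub_mono {k k' n : ℕ} (h : k ≤ k') : X.KSub k n ≤ X.KSub k' n := by
  intro g hg
  rw [mem_KSub] at hg ⊢
  exact fun q hq i h1 h2 => hg q hq i (by omega) h2

lemma N_eq_KSub (n : ℕ) : X.N n = X.KSub 0 n := by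
  ext g
  cases n with
  | zero =>
    simp only [SimplicialGroup.N, Subgroup.mem_top, true_iff, mem_KSub]
    intro q hq; omega
  | succ q =>
    rw [mem_KSub]
    simp only [SimplicialGroup.N, Subgroup.mem_iInf, MonoidHom.mem_ker, Finset.mem_Icc]
    constructor
    · rintro h q' hq' i h1 h2
      obtain rfl : q' = q := by omega
      rw [castHom_self]
      exact h i ⟨h1, h2⟩
    · rintro h i ⟨h1, h2⟩
      have := h q rfl i h1 h2
      rwa [castHom_self] at this
lemma KSub_self_eq_top (n : ℕ) : X.KSub n n = ⊤ := by
  rw [eq_top_iff]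
  intro g _
  rw [mem_KSub]
  intro q hq i h1 h2; omega

lemma castHom_mem_KSub {k a b : ℕ} (h : a = b) {g : X.G a} (hg : g ∈ X.KSub k a) :
    X.castHom h g ∈ X.KSub k b := by subst h; exact hg

lemma castHom_mem_N {a b : ℕ} (h : a = b) {g : X.G a} (hg : g ∈ X.N a) :
    X.castHom h g ∈ X.N b := by subst h; exact hg

/-- Key step: a degeneracy `s_j` maps `⋂_{i>j} ker ∂ᵢ` into `⋂_{i>K} ker ∂ᵢ` for `j < K`. -/
lemma s_mem_KSub {M j K : ℕ} (hj : j < K) {y : X.G M} (hy : y ∈ X.KSub j M) :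
    X.s M j y ∈ X.KSub K (M + 1) := by
  rw [mem_KSub]
  intro q hq i h1 h2
  obtain rfl : q = M := by omega
  rw [castHom_self]
  -- i ≥ K + 1 ≥ j + 2
  obtain ⟨i₀, rfl⟩ : ∃ i₀, i = i₀ + 1 := ⟨i - 1, by omega⟩
  cases q with
  | zero => omega
  | succ M' =>
    have hds := X.ds_gt M' i₀ j (by omega) (by omega)
    have : X.d (M' + 1) (i₀ + 1) (X.s (M' + 1) j y) = X.s M' j (X.d M' i₀ y) :=
      congrFun (congrArg (fun f => f.toFun) hds) y
    rw [this]
    have hy' := (X.mem_KSub.mp hy) M' rfl i₀ (by omega) (by omega)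
    rw [castHom_self] at hy'
    rw [hy', map_one]

/-- The composite degeneracy of a strictly decreasing list of indices `< K`
maps the Moore subgroup into `⋂_{i>K} ker ∂ᵢ`. -/
lemma sComp_mem_KSub : ∀ (l : List ℕ) (m K : ℕ) (x : X.G m),
    List.Pairwise (· > ·) l → (∀ j ∈ l, j < K) → x ∈ X.N m →
    X.sComp l m x ∈ X.KSub K (m + l.length)
  | [], m, K, x, _, _, hx => by
    simpa using X.KSub_mono (Nat.zero_le K) ((X.N_eq_KSub m) ▸ hx)
  | j :: t, m, K, x, hp, hb, hx => by
    have ht : X.sComp t m x ∈ X.KSub j (m + t.length) :=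
      sComp_mem_KSub t m j x hp.of_cons (fun i hi => List.rel_of_pairwise_cons hp hi) hx
    exact X.s_mem_KSub (hb j (List.mem_cons_self (a := j) (l := t))) ht

end SimplicialGroup

lemma mem_bitSet_lt {k m j : ℕ} (h : j ∈ bitSet k m) : j < k := by
  simp only [bitSet, Finset.mem_filter, Finset.mem_range] at h
  exact h.1

lemma bitSet_zero (m : ℕ) : bitSet 0 m = ∅ := by
  simp [bitSet]

lemma bitSet_succ_lt (k m : ℕ) (h : m < 2^k) : bitSet (k+1) m = bitSet k m := by
  unfold bitSet
  rw [Finset.range_add_one, Finset.filter_insert, if_neg]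
  simp [Nat.testBit_eq_false_of_lt h]

lemma bitSet_succ_add (k m : ℕ) (h : m < 2^k) :
    bitSet (k+1) (2^k + m) = insert k (bitSet k m) := by
  unfold bitSet
  rw [Finset.range_add_one, Finset.filter_insert, if_pos]
  · congr 1
    apply Finset.filter_congr
    intro i hi
    rw [Finset.mem_range] at hi
    rw [Nat.testBit_two_pow_add_gt hi]
  · rw [Nat.testBit_two_pow_add_eq, Nat.testBit_eq_false_of_lt h]
    rfl

namespace SimplicialGroup

variable (X : SimplicialGroup)

lemma sFinset_congr {n : ℕ} {A B : Finset ℕ} (h : A = B) (hA : A.card ≤ n)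
    (hB : B.card ≤ n) (z : X.G (n - B.card)) :
    X.sFinset n A hA (X.castHom (show n - B.card = n - A.card by rw [h]) z) =
      X.sFinset n B hB z := by subst h; rfl

lemma sFinset_empty {n : ℕ} (hA : (∅ : Finset ℕ).card ≤ n) (z : X.G (n - (∅ : Finset ℕ).card)) :
    X.sFinset n ∅ hA z = X.castHom (by simp) z := by
  simp only [sFinset, MonoidHom.comp_apply]
  have hl : ((∅ : Finset ℕ).sort (· ≤ ·)).reverse = [] := by simp
  rw [← X.sComp_congr hl.symm, castHom_castHom]
  rfl

lemma sort_insert_max {k : ℕ} {β : Finset ℕ} (hβ : ∀ j ∈ β, j < k) :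
    ((insert k β).sort (· ≤ ·)).reverse = k :: (β.sort (· ≤ ·)).reverse := by
  have hk : k ∉ β := fun h => lt_irrefl k (hβ k h)
  have : (insert k β).sort (· ≤ ·) = β.sort (· ≤ ·) ++ [k] := by
    refine (fun p s => List.Perm.eq_of_pairwise' (Finset.pairwise_sort _ _) s p) ?_ ?_
    · refine ((Finset.sort_perm_toList _ _).trans ?_).trans
        (List.perm_append_singleton k _).symm
      refine ((Finset.toList_insert hk).trans ?_)
      exact List.Perm.cons k (Finset.sort_perm_toList _ _).symm
    · refine List.pairwise_append.mpr ⟨Finset.pairwise_sort _ _, List.pairwise_singleton _ _, ?_⟩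
      intro a ha b hb
      rw [List.mem_singleton] at hb
      subst hb
      exact le_of_lt (hβ a ((Finset.mem_sort _).mp ha))
  rw [this, List.reverse_append]
  simp

lemma sFinset_insert {n k : ℕ} {β : Finset ℕ} (hβ : ∀ j ∈ β, j < k) (hk : k ≤ n)
    (hβc : β.card ≤ n) (hc : (insert k β).card ≤ n + 1)
    (z : X.G ((n + 1) - (insert k β).card)) :
    X.sFinset (n+1) (insert k β) hc z =
      X.s n k (X.sFinset n β hβc (X.castHom
        (by rw [Finset.card_insert_of_notMem (fun h => lt_irrefl k (hβ k h))]; omega) z)) := by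
  have hk' : k ∉ β := fun h => lt_irrefl k (hβ k h)
  have hcard : (insert k β).card = β.card + 1 := Finset.card_insert_of_notMem hk'
  simp only [sFinset, MonoidHom.comp_apply]
  rw [X.sComp_congr' (sort_insert_max hβ), castHom_castHom]
  simp only [sComp, MonoidHom.comp_apply]
  rw [X.sComp_castHom, castHom_castHom, X.s_castHom]

end SimplicialGroup

namespace SimplicialGroup

variable (X : SimplicialGroup)

/-- Each factor `s_α(x)` with `α ⊆ {0,…,K-1}` and `x` in the Moore subgroup lies in
`⋂_{i>K} ker ∂ᵢ`. -/
lemma sFinset_mem_KSub {n K : ℕ} {A : Finset ℕ} (hA : ∀ j ∈ A, j < K)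
    (hc : A.card ≤ n) {x : X.G (n - A.card)} (hx : x ∈ X.N (n - A.card)) :
    X.sFinset n A hc x ∈ X.KSub K n := by
  apply X.castHom_mem_KSub
  apply X.sComp_mem_KSub
  · have := (Finset.sortedLT_sort A).pairwise
    have h1 : List.Pairwise (· < ·) (A.sort (· ≤ ·)) := this
    have := List.pairwise_reverse.mpr h1
    exact this
  · intro j hj
    rw [List.mem_reverse, Finset.mem_sort] at hj
    exact hA j hj
  · exact hx

/-- Transport of Moore-subgroup elements along an equality of levels. -/
def castN {a b : ℕ} (h : a = b) (y : {z : X.G a // z ∈ X.N a}) :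
    {z : X.G b // z ∈ X.N b} := ⟨X.castHom h y.val, X.castHom_mem_N h y.property⟩

lemma castN_castN {a b c : ℕ} (h1 : a = b) (h2 : b = c) (y : {z : X.G a // z ∈ X.N a}) :
    X.castN h2 (X.castN h1 y) = X.castN (h1.trans h2) y := by subst h1; subst h2; rfl

lemma castN_self {a : ℕ} (h : a = a) (y : {z : X.G a // z ∈ X.N a}) :
    X.castN h y = y := rfl

lemma castN_val {a b : ℕ} (h : a = b) (y : {z : X.G a // z ∈ X.N a}) :
    (X.castN h y).val = X.castHom h y.val := rfl

end SimplicialGroup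

/-- Splitting a product over `Fin N` with `N = a + b` into two blocks. -/
lemma prod_finRange_split {M : Type*} [Monoid M] (a b N : ℕ) (h : N = a + b)
    (f : Fin N → M) :
    ((List.finRange N).map f).prod =
      ((List.finRange a).map (fun m => f ⟨m.val, by omega⟩)).prod *
      ((List.finRange b).map (fun m => f ⟨a + m.val, by omega⟩)).prod := by
  subst h
  rw [← List.ofFn_eq_map, ← List.ofFn_eq_map, ← List.ofFn_eq_map, List.ofFn_add (f := f),
    List.prod_append]
  congr 1

def emb₁ (k : ℕ) (m : Fin (2^k)) : Fin (2^(k+1)) :=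
  ⟨m.val, by have := m.isLt; have h : (2:ℕ)^(k+1) = 2^k + 2^k := by rw [pow_succ]; omega
             omega⟩

def emb₂ (k : ℕ) (m : Fin (2^k)) : Fin (2^(k+1)) :=
  ⟨2^k + m.val, by have := m.isLt; have h : (2:ℕ)^(k+1) = 2^k + 2^k := by rw [pow_succ]; omega
                   omega⟩

lemma emb₁_val (k : ℕ) (m : Fin (2^k)) : (emb₁ k m).val = m.val := rfl
lemma emb₂_val (k : ℕ) (m : Fin (2^k)) : (emb₂ k m).val = 2^k + m.val := rfl

lemma bitSet_emb₁ (k : ℕ) (m : Fin (2^k)) :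
    bitSet (k+1) (emb₁ k m).val = bitSet k m.val := bitSet_succ_lt k m.val m.isLt

lemma bitSet_emb₂ (k : ℕ) (m : Fin (2^k)) :
    bitSet (k+1) (emb₂ k m).val = insert k (bitSet k m.val) := bitSet_succ_add k m.val m.isLt

lemma level₁ (k n' : ℕ) (m : Fin (2^k)) :
    (n'+1) - (bitSet k m.val).card = (n'+1) - (bitSet (k+1) (emb₁ k m).val).card := by
  rw [bitSet_emb₁]

lemma level₂ (k n' : ℕ) (m : Fin (2^k)) :
    n' - (bitSet k m.val).card = (n'+1) - (bitSet (k+1) (emb₂ k m).val).card := by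
  rw [bitSet_emb₂, Finset.card_insert_of_notMem (fun hc => lt_irrefl k (mem_bitSet_lt hc))]
  omega

lemma prod_finRange_split' {M : Type*} [Monoid M] {a b N : ℕ} (h : N = a + b)
    (f : Fin N → M) (e1 : Fin a → Fin N) (e2 : Fin b → Fin N)
    (he1 : ∀ m, (e1 m).val = m.val) (he2 : ∀ m, (e2 m).val = a + m.val) :
    ((List.finRange N).map f).prod =
      ((List.finRange a).map (fun m => f (e1 m))).prod *
      ((List.finRange b).map (fun m => f (e2 m))).prod := by
  rw [prod_finRange_split a b N h f]
  congr 1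
  · congr 1
    apply List.map_congr_left
    intro m _
    exact congrArg f (Fin.ext (he1 m).symm)
  · congr 1
    apply List.map_congr_left
    intro m _
    exact congrArg f (Fin.ext (he2 m).symm)

namespace SimplicialGroup

variable (X : SimplicialGroup)

lemma sFinset_insert' {n k : ℕ} {A B : Finset ℕ} (hAB : A = insert k B)
    (hB : ∀ j ∈ B, j < k) (hk : k ≤ n) (hA : A.card ≤ n + 1) (hBc : B.card ≤ n)
    (pf : n - B.card = (n + 1) - A.card) (v : X.G (n - B.card)) :
    X.sFinset (n+1) A hA (X.castHom pf v) = X.s n k (X.sFinset n B hBc v) := by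
  subst hAB
  rw [X.sFinset_insert hB hk hBc hA, castHom_castHom, castHom_self]

set_option maxHeartbeats 2000000 in
lemma split_prod {k n' : ℕ} (hk : k ≤ n')
    (x : (m : Fin (2^(k+1))) →
      {v : X.G ((n'+1) - (bitSet (k+1) m.val).card) // v ∈ X.N ((n'+1) - (bitSet (k+1) m.val).card)})
    (x₁ : (m : Fin (2^k)) →
      {v : X.G ((n'+1) - (bitSet k m.val).card) // v ∈ X.N ((n'+1) - (bitSet k m.val).card)})
    (y : (m : Fin (2^k)) →
      {v : X.G (n' - (bitSet k m.val).card) // v ∈ X.N (n' - (bitSet k m.val).card)})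
    (hx₁ : ∀ m : Fin (2^k), (x (emb₁ k m)).val = X.castHom (level₁ k n' m) (x₁ m).val)
    (hy : ∀ m : Fin (2^k), (x (emb₂ k m)).val = X.castHom (level₂ k n' m) (y m).val) :
    ((List.finRange (2^(k+1))).map (fun m =>
        X.sFinset (n'+1) (bitSet (k+1) m.val) (le_trans (bitSet_card_le _ _) (by omega))
          (x m).val)).prod =
    ((List.finRange (2^k)).map (fun m =>
        X.sFinset (n'+1) (bitSet k m.val) (le_trans (bitSet_card_le _ _) (by omega))
          (x₁ m).val)).prod *
    X.s n' k (((List.finRange (2^k)).map (fun m =>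
        X.sFinset n' (bitSet k m.val) (le_trans (bitSet_card_le _ _) hk)
          (y m).val)).prod) := by
  rw [prod_finRange_split' (show 2^(k+1) = 2^k + 2^k by rw [pow_succ]; omega) _
    (emb₁ k) (emb₂ k) (emb₁_val k) (emb₂_val k)]
  congr 1
  · congr 1
    apply List.map_congr_left
    intro m _
    rw [hx₁ m]
    exact X.sFinset_congr (bitSet_emb₁ k m) _ _ _
  · rw [map_list_prod (X.s n' k), List.map_map]
    congr 1
    apply List.map_congr_left
    intro m _
    rw [hy m]
    exact X.sFinset_insert' (bitSet_emb₂ k m) (fun j hj => mem_bitSet_lt hj) hk _ _ _ _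

end SimplicialGroup

namespace SimplicialGroup

variable (X : SimplicialGroup)

/-- Evaluating `sFinset` on the empty bit set. -/
lemma sFinset_bitSet_zero {n : ℕ} (m₀ : ℕ) (pf : (bitSet 0 m₀).card ≤ n)
    (v : X.G (n - (bitSet 0 m₀).card)) :
    X.sFinset n (bitSet 0 m₀) pf v =
      X.castHom (show n - (bitSet 0 m₀).card = n by rw [bitSet_zero]; simp) v := by
  have q : n - (bitSet 0 m₀).card = n - (∅ : Finset ℕ).card := by rw [bitSet_zero]
  have hv : X.castHom (show n - (∅ : Finset ℕ).card = n - (bitSet 0 m₀).card by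
      rw [bitSet_zero]) (X.castHom q v) = v := by
    rw [castHom_castHom]; rfl
  calc X.sFinset n (bitSet 0 m₀) pf v
      = X.sFinset n (bitSet 0 m₀) pf (X.castHom _ (X.castHom q v)) := by rw [hv]
    _ = X.sFinset n ∅ (by simp) (X.castHom q v) :=
        X.sFinset_congr (bitSet_zero m₀) _ _ _
    _ = X.castHom _ (X.castHom q v) := X.sFinset_empty _ _
    _ = _ := by rw [castHom_castHom]

lemma d_kill {k n' : ℕ} (hk : k + 1 ≤ n' + 1) {a : X.G (n'+1)} (ha : a ∈ X.KSub k (n'+1)) :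
    X.d n' (k+1) a = 1 := by
  have := (X.mem_KSub.mp ha) n' rfl (k+1) le_rfl hk
  rwa [castHom_self] at this

set_option maxHeartbeats 1000000 in
lemma block_mem {k n : ℕ} (hkn : k ≤ n)
    (z : (m : Fin (2^k)) →
      {v : X.G (n - (bitSet k m.val).card) // v ∈ X.N (n - (bitSet k m.val).card)}) :
    ((List.finRange (2^k)).map (fun m =>
      X.sFinset n (bitSet k m.val) (le_trans (bitSet_card_le k m.val) hkn) (z m).val)).prod
      ∈ X.KSub k n := by
  apply Subgroup.list_prod_mem
  intro a ha
  rw [List.mem_map] at ha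
  obtain ⟨m, _, rfl⟩ := ha
  exact X.sFinset_mem_KSub (fun j hj => mem_bitSet_lt hj) _ (z m).property

set_option maxHeartbeats 4000000 in
theorem key (k : ℕ) : ∀ n, ∀ hkn : k ≤ n, ∀ g : X.G n,
    g ∈ X.KSub k n →
    ∃! x : (m : Fin (2^k)) →
        {y : X.G (n - (bitSet k m.val).card) // y ∈ X.N (n - (bitSet k m.val).card)},
      g = ((List.finRange (2^k)).map (fun m =>
        X.sFinset n (bitSet k m.val) (le_trans (bitSet_card_le k m.val) hkn) (x m).val)).prod := by
  induction k with
  | zero =>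
    intro n hkn g hg
    have hgN : g ∈ X.N n := by rw [X.N_eq_KSub]; exact hg
    have hprod : ∀ (x : (m : Fin (2^0)) →
        {y : X.G (n - (bitSet 0 m.val).card) // y ∈ X.N (n - (bitSet 0 m.val).card)}),
        ((List.finRange (2^0)).map (fun m =>
          X.sFinset n (bitSet 0 m.val) (le_trans (bitSet_card_le 0 m.val) hkn) (x m).val)).prod
        = X.sFinset n (bitSet 0 (0:ℕ)) (le_trans (bitSet_card_le 0 0) hkn)
            (x ⟨0, by omega⟩).val := by
      intro x
      rw [prod_finRange_one (2^0) (by norm_num) _]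
    refine ⟨fun m => X.castN (show n = n - (bitSet 0 m.val).card by rw [bitSet_zero]; simp)
      ⟨g, hgN⟩, ?_, ?_⟩
    · beta_reduce
      rw [hprod, X.sFinset_bitSet_zero, castN_val, castHom_castHom]
      rfl
    · intro x' hx'
      rw [hprod, X.sFinset_bitSet_zero] at hx'
      funext m
      have hm : m = ⟨0, by omega⟩ := Fin.ext (by omega)
      subst hm
      have hval : X.castHom (show n = n - (bitSet 0 ((⟨0, by omega⟩ : Fin (2^0))).val).card
          by rw [bitSet_zero]; simp) g = (x' ⟨0, by omega⟩).val := by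
        rw [hx', castHom_castHom]
        rfl
      exact Subtype.ext hval.symm
  | succ k IH =>
    intro n hkn g hg
    obtain ⟨n', rfl⟩ : ∃ n', n = n' + 1 := ⟨n - 1, by omega⟩
    have hk' : k ≤ n' := by omega
    have hds : ∀ w, X.d n' (k+1) (X.s n' k w) = w := fun w =>
      congrFun (congrArg (fun f => f.toFun) (X.ds_succ n' k hk')) w
    -- the "top face" component
    have hhmem : X.d n' (k+1) g ∈ X.KSub k n' := by
      rw [mem_KSub]
      intro q hq i h1 h2
      subst hq
      rw [castHom_self]
      have hdd := X.dd q (k+1) i (by omega) (by omega)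
      have happ : X.d q i (X.d (q+1) (k+1) g) = X.d q (k+1) (X.d (q+1) (i+1) g) :=
        (congrFun (congrArg (fun f => f.toFun) hdd) g).symm
      rw [happ]
      have hgi : X.d (q+1) (i+1) g = 1 := by
        have := (X.mem_KSub.mp hg) (q+1) rfl (i+1) (by omega) (by omega)
        rwa [castHom_self] at this
      rw [hgi, map_one]
    have hPmem : g * (X.s n' k (X.d n' (k+1) g))⁻¹ ∈ X.KSub k (n'+1) := by
      rw [mem_KSub]
      intro q hq i h1 h2
      have hq2 : n' = q := by omega
      subst hq2
      rw [castHom_self, map_mul, map_inv]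
      rcases eq_or_lt_of_le h1 with hik | hik
      · -- i = k + 1
        rw [← hik, hds]
        group
      · -- i ≥ k + 2
        have hgi : X.d n' i g = 1 := by
          have := (X.mem_KSub.mp hg) n' rfl i (by omega) (by omega)
          rwa [castHom_self] at this
        obtain ⟨i₀, rfl⟩ : ∃ i₀, i = i₀ + 1 := ⟨i - 1, by omega⟩
        cases n' with
        | zero => omega
        | succ n'' =>
          have hds2 := X.ds_gt n'' i₀ k (by omega) (by omega)
          have happ : X.d (n''+1) (i₀+1) (X.s (n''+1) k (X.d (n''+1) (k+1) g)) =
              X.s n'' k (X.d n'' i₀ (X.d (n''+1) (k+1) g)) :=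
            congrFun (congrArg (fun f => f.toFun) hds2) _
          have hh0 : X.d n'' i₀ (X.d (n''+1) (k+1) g) = 1 := by
            have := (X.mem_KSub.mp hhmem) n'' rfl i₀ (by omega) (by omega)
            rwa [castHom_self] at this
          rw [hgi, happ, hh0, map_one]
          group
    obtain ⟨y, hy, hyuniq⟩ := IH n' hk' (X.d n' (k+1) g) hhmem
    obtain ⟨x₁, hx₁, hx₁uniq⟩ := IH (n'+1) (by omega) _ hPmem
    -- the combined family
    refine ⟨fun m => if h : m.val < 2^k
        then X.castN (show (n'+1) - (bitSet k m.val).card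
              = (n'+1) - (bitSet (k+1) m.val).card by rw [bitSet_succ_lt k m.val h])
            (x₁ ⟨m.val, h⟩)
        else X.castN (by
          have hlt : m.val - 2^k < 2^k := by
            have h1 := m.isLt
            have h2p : (2:ℕ)^(k+1) = 2^k + 2^k := by rw [pow_succ]; omega
            omega
          have h2 : (2:ℕ)^k + (m.val - 2^k) = m.val := by omega
          show n' - (bitSet k (m.val - 2^k)).card = (n'+1) - (bitSet (k+1) m.val).card
          conv_rhs => rw [← h2]
          rw [bitSet_succ_add k _ hlt,
            Finset.card_insert_of_notMem (fun hc => lt_irrefl k (mem_bitSet_lt hc))]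
          omega)
          (y ⟨m.val - 2^k, by
            have h1 := m.isLt
            have h2p : (2:ℕ)^(k+1) = 2^k + 2^k := by rw [pow_succ]; omega
            omega⟩), ?_, ?_⟩
    · -- existence
      have mystep : g = (g * (X.s n' k (X.d n' (k+1) g))⁻¹) * X.s n' k (X.d n' (k+1) g) := by
        group
      rw [hx₁] at mystep
      rw [hy] at mystep
      refine mystep.trans (X.split_prod hk' _ x₁ y ?_ ?_).symm
      · intro m
        beta_reduce
        rw [dif_pos (show (emb₁ k m).val < 2^k from m.isLt)]
        have hp1 : ∀ (j : Fin (2^k)) (hj : j = m)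
            (P : (n'+1) - (bitSet k j.val).card = (n'+1) - (bitSet (k+1) (emb₁ k m).val).card),
            (X.castN P (x₁ j)).val = X.castHom (level₁ k n' m) (x₁ m).val := by
          rintro j rfl P
          rw [castN_val]
        exact hp1 _ (Fin.ext rfl) _
      · intro m
        beta_reduce
        rw [dif_neg (show ¬ ((emb₂ k m).val < 2^k) by rw [emb₂_val]; omega)]
        have hp2 : ∀ (j : Fin (2^k)) (hj : j = m)
            (P : n' - (bitSet k j.val).card = (n'+1) - (bitSet (k+1) (emb₂ k m).val).card),
            (X.castN P (y j)).val = X.castHom (level₂ k n' m) (y m).val := by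
          rintro j rfl P
          rw [castN_val]
        exact hp2 _ (Fin.ext (show 2^k + m.val - 2^k = m.val by omega)) _
    · -- uniqueness
      intro x' hx'
      have hsplit := X.split_prod hk' x'
        (fun m => X.castN (show (n'+1) - (bitSet (k+1) (emb₁ k m).val).card
            = (n'+1) - (bitSet k m.val).card by rw [bitSet_emb₁]) (x' (emb₁ k m)))
        (fun m => X.castN (level₂ k n' m).symm (x' (emb₂ k m)))
        (fun m => by rw [castN_val, castHom_castHom]; rfl)
        (fun m => by rw [castN_val, castHom_castHom]; rfl)
      rw [hsplit] at hx'
      have hyeq := hyuniq (fun m => X.castN (level₂ k n' m).symm (x' (emb₂ k m))) ?hQ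
      case hQ =>
        rw [hx', map_mul,
          X.d_kill (by omega) (X.block_mem (by omega)
            (fun m => X.castN (show (n'+1) - (bitSet (k+1) (emb₁ k m).val).card
              = (n'+1) - (bitSet k m.val).card by rw [bitSet_emb₁]) (x' (emb₁ k m)))),
          one_mul, hds]
      have hx₁eq := hx₁uniq (fun m => X.castN (show (n'+1) - (bitSet (k+1) (emb₁ k m).val).card
            = (n'+1) - (bitSet k m.val).card by rw [bitSet_emb₁]) (x' (emb₁ k m))) ?hP
      case hP =>
        rw [hx', map_mul,
          X.d_kill (by omega) (X.block_mem (by omega)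
            (fun m => X.castN (show (n'+1) - (bitSet (k+1) (emb₁ k m).val).card
              = (n'+1) - (bitSet k m.val).card by rw [bitSet_emb₁]) (x' (emb₁ k m)))),
          one_mul, hds]
        group
      funext m
      have hback : ∀ (j : Fin (2^(k+1))) (hj : j = m) (a : ℕ)
          (Q : (n'+1) - (bitSet (k+1) j.val).card = a)
          (P : a = (n'+1) - (bitSet (k+1) m.val).card),
          X.castN P (X.castN Q (x' j)) = x' m := by
        rintro j rfl a Q P
        rw [castN_castN]
        rfl
      beta_reduce
      by_cases h : m.val < 2^k
      · rw [dif_pos h, ← hx₁eq]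
        exact (hback _ (Fin.ext rfl) _ _ _).symm
      · rw [dif_neg h, ← hyeq]
        have hlt : m.val - 2^k < 2^k := by
          have h1 := m.isLt
          have h2p : (2:ℕ)^(k+1) = 2^k + 2^k := by rw [pow_succ]; omega
          omega
        exact (hback (emb₂ k ⟨m.val - 2^k, hlt⟩)
          (Fin.ext (show 2^k + (m.val - 2^k) = m.val by omega)) _ _ _).symm

end SimplicialGroup


set_option maxHeartbeats 1000000 in
/-- every `g ∈ G_n` admits a unique factorization
`g = ∏_{α ∈ S(n)} s_α (x_α)` with `x_α ∈ NG_{n - #α}`, the product being taken in the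
lexicographic order on the set `S(n)` of subsets of `{0,…,n-1}` (realized here by the
binary codes `m ∈ Fin (2^n)` in increasing order, `α = bitSet n m`). This realizes the
iterated semidirect product decomposition
`G_n ≅ (…(NG_n ⋊ s₀NG_{n-1}) ⋊ … ⋊ s_{n-1}⋯s₀NG_0)`. -/
theorem moore_semidirect_decomposition (X : SimplicialGroup) (n : ℕ) (g : X.G n) :
    ∃! x : (m : Fin (2^n)) →
        {y : X.G (n - (bitSet n m.val).card) // y ∈ X.N (n - (bitSet n m.val).card)},
      g = ((List.finRange (2^n)).map (fun m =>
        X.sFinset n (bitSet n m.val) (bitSet_card_le n m.val) (x m).val)).prod := by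
  have hg : g ∈ X.KSub n n := by rw [X.KSub_self_eq_top]; trivial
  exact X.key n n le_rfl g hg
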